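/- Let m = (m₀,m₁,m₂) ∈ ℤ³ with m₁,m₂ ≥ 0, m₀ ≥ −1, let p ∈ ℕ, and let G₋ = {(x₁,x₂,a) ∈ G : a < 1, r(x₁,x₂,a) > 1}. Then ∫_{G₋} a^{m₀} |x₁|^{m₁} |x₂|^{m₂} e^{−p·r(x₁,x₂,a)} a⁻¹ dx₁ dx₂ da < ∞ if and only if m₁ + m₂ − 2p < −2 and m₀ + p > 0. -/

import Mathlib

open Real MeasureTheory Set

noncomputable section

abbrev G := ℝ × ℝ × ℝ

/-- `cosh r(x₁,x₂,a) = (a + a⁻¹ + a⁻¹(x₁²+x₂²))/2`. -/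
def coshr (p : G) : ℝ := (p.2.2 + p.2.2⁻¹ + p.2.2⁻¹ * (p.1 ^ 2 + p.2.1 ^ 2)) / 2

/-- The distance from the identity: `r = arcosh (coshr)`. -/
def rG (p : G) : ℝ := Real.log (coshr p + Real.sqrt ((coshr p) ^ 2 - 1))

/-- The right Haar measure `dρ = a⁻¹ dx₁ dx₂ da` (supported on `a > 0`). -/
def ρG : Measure G :=
  (volume : Measure G).withDensity (fun p => ENNReal.ofReal (if 0 < p.2.2 then p.2.2⁻¹ else 0))

/-- `G₋ = {(x₁,x₂,a) : a < 1, r > 1}`. -/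
def Gminus : Set G := {p : G | p.2.2 < 1 ∧ 1 < rG p}

/-! ### Auxiliary definitions and basic bounds -/

lemma measurable_coshr : Measurable coshr := by unfold coshr; fun_prop

lemma measurable_rG : Measurable rG :=
  Real.measurable_log.comp ((measurable_coshr.add
    (((measurable_coshr.pow_const 2).sub measurable_const).sqrt)))

def rho2 (q : G) : ℝ := 1 + q.1 ^ 2 + q.2.1 ^ 2

lemma one_le_rho2 (q : G) : 1 ≤ rho2 q := by
  unfold rho2; nlinarith [sq_nonneg q.1, sq_nonneg q.2.1]

lemma rho2_pos (q : G) : 0 < rho2 q := lt_of_lt_of_le one_pos (one_le_rho2 q)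

lemma coshr_bounds {q : G} (ha : 0 < q.2.2) (ha1 : q.2.2 < 1) :
    q.2.2⁻¹ * rho2 q / 2 ≤ coshr q ∧ coshr q ≤ q.2.2⁻¹ * rho2 q := by
  have hinv : 1 < q.2.2⁻¹ := (one_lt_inv₀ ha).2 ha1
  have h1 : coshr q = (q.2.2 + q.2.2⁻¹ * rho2 q) / 2 := by unfold coshr rho2; ring
  have h2 : q.2.2 ≤ q.2.2⁻¹ * rho2 q := by nlinarith [one_le_rho2 q]
  constructor
  · rw [h1]; linarith
  · rw [h1]; linarith

lemma exp_rG_bounds {q : G} (ha : 0 < q.2.2) (ha1 : q.2.2 < 1) :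
    q.2.2⁻¹ * rho2 q / 2 ≤ Real.exp (rG q) ∧ Real.exp (rG q) ≤ 2 * (q.2.2⁻¹ * rho2 q) := by
  obtain ⟨hc1, hc2⟩ := coshr_bounds ha ha1
  have hinv : 0 < q.2.2⁻¹ := inv_pos.2 ha
  have hcpos : 0 < coshr q := lt_of_lt_of_le (by nlinarith [rho2_pos q]) hc1
  have hs0 : 0 ≤ Real.sqrt ((coshr q) ^ 2 - 1) := Real.sqrt_nonneg _
  have hsle : Real.sqrt ((coshr q) ^ 2 - 1) ≤ coshr q := by
    calc Real.sqrt ((coshr q) ^ 2 - 1) ≤ Real.sqrt ((coshr q) ^ 2) :=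
          Real.sqrt_le_sqrt (by linarith)
      _ = coshr q := by rw [Real.sqrt_sq hcpos.le]
  have hXpos : 0 < coshr q + Real.sqrt ((coshr q) ^ 2 - 1) := by linarith
  rw [rG, Real.exp_log hXpos]
  constructor <;> linarith

lemma exp_neg_bounds {q : G} (ha : 0 < q.2.2) (ha1 : q.2.2 < 1) (p : ℕ) :
    (q.2.2 / (2 * rho2 q)) ^ p ≤ Real.exp (-(p : ℝ) * rG q) ∧
    Real.exp (-(p : ℝ) * rG q) ≤ (2 * q.2.2 / rho2 q) ^ p := by
  obtain ⟨h1, h2⟩ := exp_rG_bounds ha ha1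
  have hinv : 0 < q.2.2⁻¹ := inv_pos.2 ha
  have hrho := rho2_pos q
  have he : Real.exp (-(p : ℝ) * rG q) = (Real.exp (rG q))⁻¹ ^ p := by
    rw [← Real.exp_neg, ← Real.exp_nat_mul]; ring_nf
  have hEpos : 0 < Real.exp (rG q) := Real.exp_pos _
  constructor
  · rw [he]
    apply pow_le_pow_left₀ (by positivity)
    rw [div_le_iff₀ (by positivity), inv_mul_eq_div, le_div_iff₀ hEpos]
    calc q.2.2 * Real.exp (rG q) ≤ q.2.2 * (2 * (q.2.2⁻¹ * rho2 q)) := by nlinarith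
      _ = 2 * rho2 q * (q.2.2 * q.2.2⁻¹) := by ring
      _ = 2 * rho2 q := by rw [mul_inv_cancel₀ ha.ne']; ring
  · rw [he]
    apply pow_le_pow_left₀ (by positivity)
    rw [inv_le_comm₀ hEpos (by positivity), inv_div]
    calc rho2 q / (2 * q.2.2) = q.2.2⁻¹ * rho2 q / 2 := by
          rw [div_eq_div_iff (by positivity) (by positivity)]; field_simp
      _ ≤ Real.exp (rG q) := h1

lemma measurableSet_Gminus : MeasurableSet Gminus := by
  have : Gminus = {p : G | p.2.2 < 1} ∩ {p : G | 1 < rG p} := by ext q; simp [Gminus, Set.mem_setOf_eq]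
  rw [this]
  exact (measurableSet_lt (measurable_snd.snd) measurable_const).inter
    (measurableSet_lt measurable_const measurable_rG)

/-- the density of `ρG` -/
def dens (q : G) : ENNReal := ENNReal.ofReal (if 0 < q.2.2 then q.2.2⁻¹ else 0)

lemma measurable_dens : Measurable dens := by
  apply ENNReal.measurable_ofReal.comp
  exact Measurable.ite (measurableSet_lt measurable_const measurable_snd.snd)
    measurable_snd.snd.inv measurable_const

/-- the integrand -/
def intg (m₀ m₁ m₂ : ℤ) (p : ℕ) (x : G) : ℝ :=
  x.2.2 ^ m₀ * |x.1| ^ m₁ * |x.2.1| ^ m₂ * Real.exp (-(p : ℝ) * rG x)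

lemma measurable_intg (m₀ m₁ m₂ : ℤ) (p : ℕ) : Measurable (intg m₀ m₁ m₂ p) := by
  have h := measurable_rG
  unfold intg
  fun_prop

lemma intg_nonneg (m₀ m₁ m₂ : ℤ) (p : ℕ) {x : G} (hx : 0 < x.2.2) : 0 ≤ intg m₀ m₁ m₂ p x := by
  unfold intg
  have := Real.exp_pos (-(p : ℝ) * rG x)
  positivity

/-- reduction of the `ρG`-integral to a volume integral -/
lemma key_reduction (m₀ m₁ m₂ : ℤ) (p : ℕ) :
    ∫⁻ x in Gminus, ENNReal.ofReal (intg m₀ m₁ m₂ p x) ∂ρG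
      = ∫⁻ x in Gminus, dens x * ENNReal.ofReal (intg m₀ m₁ m₂ p x) ∂volume := by
  rw [ρG, restrict_withDensity measurableSet_Gminus]
  exact lintegral_withDensity_eq_lintegral_mul _ measurable_dens
      ((measurable_intg m₀ m₁ m₂ p).ennreal_ofReal)

/-! ### Forward direction: convergence -/

lemma abs_fst_le (q : G) : |q.1| ≤ (rho2 q) ^ ((1:ℝ)/2) := by
  rw [← Real.sqrt_eq_rpow]
  rw [show |q.1| = Real.sqrt (q.1 ^ 2) from (Real.sqrt_sq_eq_abs q.1).symm]
  apply Real.sqrt_le_sqrt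
  unfold rho2; nlinarith [sq_nonneg q.2.1]

lemma abs_snd_le (q : G) : |q.2.1| ≤ (rho2 q) ^ ((1:ℝ)/2) := by
  rw [← Real.sqrt_eq_rpow]
  rw [show |q.2.1| = Real.sqrt (q.2.1 ^ 2) from (Real.sqrt_sq_eq_abs q.2.1).symm]
  apply Real.sqrt_le_sqrt
  unfold rho2; nlinarith [sq_nonneg q.1]

lemma real_up (m₀ : ℤ) (n₁ n₂ p : ℕ) (h2 : 0 < m₀ + (p:ℤ)) {q : G}
    (ha : 0 < q.2.2) (ha1 : q.2.2 < 1) :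
    q.2.2⁻¹ * intg m₀ n₁ n₂ p q
      ≤ 2 ^ p * (rho2 q) ^ ((n₁:ℝ)/2 + (n₂:ℝ)/2 - p) := by
  have hρ1 := one_le_rho2 q
  have hρ0 := rho2_pos q
  have hexp := (exp_neg_bounds ha ha1 p).2
  have hE0 : 0 < Real.exp (-(p : ℝ) * rG q) := Real.exp_pos _
  have ha' : (0:ℝ) < q.2.2 := ha
  have hA : q.2.2 ^ m₀ * q.2.2 ^ (p:ℤ) * q.2.2⁻¹ ≤ 1 := by
    rw [← zpow_neg_one, ← zpow_add₀ ha.ne', ← zpow_add₀ ha.ne']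
    exact zpow_le_one₀ ha ha1.le (by omega)
  have hx1 : |q.1| ^ n₁ ≤ (rho2 q) ^ ((n₁:ℝ)/2) := by
    calc |q.1| ^ n₁ ≤ ((rho2 q) ^ ((1:ℝ)/2)) ^ n₁ :=
          pow_le_pow_left₀ (abs_nonneg _) (abs_fst_le q) n₁
      _ = (rho2 q) ^ ((n₁:ℝ)/2) := by
          rw [← Real.rpow_natCast ((rho2 q) ^ ((1:ℝ)/2)) n₁, ← Real.rpow_mul hρ0.le]
          ring_nf
  have hy1 : |q.2.1| ^ n₂ ≤ (rho2 q) ^ ((n₂:ℝ)/2) := by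
    calc |q.2.1| ^ n₂ ≤ ((rho2 q) ^ ((1:ℝ)/2)) ^ n₂ :=
          pow_le_pow_left₀ (abs_nonneg _) (abs_snd_le q) n₂
      _ = (rho2 q) ^ ((n₂:ℝ)/2) := by
          rw [← Real.rpow_natCast ((rho2 q) ^ ((1:ℝ)/2)) n₂, ← Real.rpow_mul hρ0.le]
          ring_nf
  unfold intg
  calc q.2.2⁻¹ * (q.2.2 ^ m₀ * |q.1| ^ (n₁:ℤ) * |q.2.1| ^ (n₂:ℤ) * Real.exp (-(p : ℝ) * rG q))
      ≤ q.2.2⁻¹ * (q.2.2 ^ m₀ * |q.1| ^ (n₁:ℤ) * |q.2.1| ^ (n₂:ℤ) * (2 * q.2.2 / rho2 q) ^ p) := by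
        gcongr
      _ = (q.2.2 ^ m₀ * q.2.2 ^ (p:ℤ) * q.2.2⁻¹) * (2 ^ p * (|q.1| ^ n₁ * |q.2.1| ^ n₂ / (rho2 q) ^ p)) := by
        rw [zpow_natCast, zpow_natCast, zpow_natCast, div_pow, mul_pow]
        field_simp
      _ ≤ 1 * (2 ^ p * ((rho2 q) ^ ((n₁:ℝ)/2) * (rho2 q) ^ ((n₂:ℝ)/2) / (rho2 q) ^ p)) := by
        apply mul_le_mul hA _ (by positivity) one_pos.le
        gcongr
      _ = 2 ^ p * (rho2 q) ^ ((n₁:ℝ)/2 + (n₂:ℝ)/2 - p) := by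
        rw [one_mul, ← Real.rpow_natCast (rho2 q) p, div_eq_mul_inv,
          ← Real.rpow_neg hρ0.le, ← Real.rpow_add hρ0, ← Real.rpow_add hρ0]
        ring_nf

lemma norm_sq_le_rho2 (q : G) : (1 + ‖(q.1, q.2.1)‖) ^ 2 / 2 ≤ rho2 q := by
  have hN : ‖(q.1, q.2.1)‖ = max |q.1| |q.2.1| := by
    rw [Prod.norm_def, Real.norm_eq_abs, Real.norm_eq_abs]
  have hsq : (max |q.1| |q.2.1|) ^ 2 ≤ q.1 ^ 2 + q.2.1 ^ 2 := by
    rcases max_cases |q.1| |q.2.1| with ⟨h, _⟩ | ⟨h, _⟩ <;> rw [h] <;>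
      nlinarith [sq_abs q.1, sq_abs q.2.1, sq_nonneg q.1, sq_nonneg q.2.1]
  have h0 : 0 ≤ max |q.1| |q.2.1| := le_max_of_le_left (abs_nonneg _)
  rw [hN]
  unfold rho2
  nlinarith [sq_nonneg (1 - max |q.1| |q.2.1|)]

lemma rho2_rpow_le (q : G) {σ : ℝ} (hσ : σ ≤ 0) :
    (rho2 q) ^ σ ≤ 2 ^ (-σ) * (1 + ‖(q.1, q.2.1)‖) ^ (2 * σ) := by
  have hN : (0:ℝ) ≤ ‖(q.1, q.2.1)‖ := norm_nonneg _
  have hb : (0:ℝ) < (1 + ‖(q.1, q.2.1)‖) ^ 2 / 2 := by positivity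
  calc (rho2 q) ^ σ ≤ ((1 + ‖(q.1, q.2.1)‖) ^ 2 / 2) ^ σ :=
        Real.rpow_le_rpow_of_nonpos hb (norm_sq_le_rho2 q) hσ
    _ = 2 ^ (-σ) * (1 + ‖(q.1, q.2.1)‖) ^ (2 * σ) := by
      rw [Real.div_rpow (by positivity) (by norm_num),
        ← Real.rpow_natCast (1 + ‖(q.1, q.2.1)‖) 2, ← Real.rpow_mul (by positivity),
        div_eq_mul_inv, ← Real.rpow_neg (by norm_num)]
      norm_num
      ring_nf

lemma tonelli_bound (A : ℝ × ℝ → ENNReal) (hA : Measurable A) :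
    ∫⁻ q : G, A (q.1, q.2.1) * ((Ioo (0:ℝ) 1).indicator 1 q.2.2) ∂volume
      = ∫⁻ w : ℝ × ℝ, A w ∂volume := by
  have hInd : Measurable ((Ioo (0:ℝ) 1).indicator (1 : ℝ → ENNReal)) :=
    measurable_const.indicator measurableSet_Ioo
  have hIone : ∫⁻ a : ℝ, (Ioo (0:ℝ) 1).indicator 1 a ∂volume = 1 := by
    rw [lintegral_indicator_one measurableSet_Ioo, Real.volume_Ioo]
    norm_num
  rw [Measure.volume_eq_prod (α := ℝ) (β := ℝ × ℝ), lintegral_prod]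
  · have hinner : ∀ x : ℝ, (∫⁻ w : ℝ × ℝ, A (x, w.1) * (Ioo (0:ℝ) 1).indicator 1 w.2 ∂volume)
        = ∫⁻ y : ℝ, A (x, y) ∂volume := by
      intro x
      have h := lintegral_prod_mul (μ := (volume : Measure ℝ)) (ν := (volume : Measure ℝ))
        (f := fun y : ℝ => A (x, y)) (g := (Ioo (0:ℝ) 1).indicator 1)
        ((hA.comp measurable_prodMk_left).aemeasurable) hInd.aemeasurable
      rw [Measure.volume_eq_prod (α := ℝ) (β := ℝ)]
      simpa [hIone] using h
    simp_rw [hinner]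
    rw [Measure.volume_eq_prod (α := ℝ) (β := ℝ), lintegral_prod _ hA.aemeasurable]
  · exact ((hA.comp (measurable_fst.prodMk measurable_snd.fst)).mul
      (hInd.comp measurable_snd.snd)).aemeasurable

lemma forward (m₀ : ℤ) (n₁ n₂ p : ℕ) (h1 : (n₁:ℤ) + (n₂:ℤ) - 2*(p:ℤ) < -2)
    (h2 : 0 < m₀ + (p:ℤ)) :
    ∫⁻ x in Gminus, dens x * ENNReal.ofReal (intg m₀ n₁ n₂ p x) ∂volume < ⊤ := by
  set r : ℝ := 2*(p:ℝ) - n₁ - n₂ with hr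
  have hr2 : (2:ℝ) < r := by
    have : (n₁:ℤ) + (n₂:ℤ) ≤ 2*(p:ℤ) - 3 := by omega
    have : (n₁:ℝ) + (n₂:ℝ) ≤ 2*(p:ℝ) - 3 := by exact_mod_cast this
    simp only [hr]; linarith
  set C : ℝ := 2 ^ p * 2 ^ (r/2) with hC
  have hC0 : 0 < C := by positivity
  set A : ℝ × ℝ → ENNReal := fun w => ENNReal.ofReal (C * (1 + ‖w‖) ^ (-r)) with hAdef
  have hAmeas : Measurable A := by
    apply ENNReal.measurable_ofReal.comp
    fun_prop
  -- pointwise bound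
  have hpt : ∀ q ∈ Gminus, dens q * ENNReal.ofReal (intg m₀ n₁ n₂ p q)
      ≤ A (q.1, q.2.1) * ((Ioo (0:ℝ) 1).indicator 1 q.2.2) := by
    intro q hq
    by_cases ha : 0 < q.2.2
    · have ha1 : q.2.2 < 1 := hq.1
      have hmem : q.2.2 ∈ Ioo (0:ℝ) 1 := ⟨ha, ha1⟩
      rw [indicator_of_mem hmem]
      simp only [Pi.one_apply, mul_one]
      have hdens : dens q = ENNReal.ofReal q.2.2⁻¹ := by unfold dens; rw [if_pos ha]
      rw [hdens, ← ENNReal.ofReal_mul (by positivity)]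
      apply ENNReal.ofReal_le_ofReal
      have hσ : ((n₁:ℝ)/2 + (n₂:ℝ)/2 - p) ≤ 0 := by simp only [hr] at hr2 ⊢; linarith
      calc q.2.2⁻¹ * intg m₀ n₁ n₂ p q
          ≤ 2 ^ p * (rho2 q) ^ ((n₁:ℝ)/2 + (n₂:ℝ)/2 - p) := real_up m₀ n₁ n₂ p h2 ha ha1
        _ ≤ 2 ^ p * (2 ^ (-((n₁:ℝ)/2 + (n₂:ℝ)/2 - p)) * (1 + ‖(q.1, q.2.1)‖) ^ (2 * ((n₁:ℝ)/2 + (n₂:ℝ)/2 - p))) := by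
            have h := rho2_rpow_le q hσ
            gcongr
        _ = C * (1 + ‖(q.1, q.2.1)‖) ^ (-r) := by
            rw [hC, hr]
            rw [← mul_assoc]
            congr 2
            · ring_nf
            · ring_nf
    · have : dens q = 0 := by unfold dens; rw [if_neg ha]; simp
      rw [this, zero_mul]
      exact zero_le
  calc ∫⁻ x in Gminus, dens x * ENNReal.ofReal (intg m₀ n₁ n₂ p x) ∂volume
      ≤ ∫⁻ q in Gminus, A (q.1, q.2.1) * ((Ioo (0:ℝ) 1).indicator 1 q.2.2) ∂volume := by
        apply setLIntegral_mono _ hpt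
        exact (hAmeas.comp (measurable_fst.prodMk measurable_snd.fst)).mul
          ((measurable_const.indicator measurableSet_Ioo).comp measurable_snd.snd)
    _ ≤ ∫⁻ q : G, A (q.1, q.2.1) * ((Ioo (0:ℝ) 1).indicator 1 q.2.2) ∂volume :=
        setLIntegral_le_lintegral _ _
    _ = ∫⁻ w : ℝ × ℝ, A w ∂volume := tonelli_bound A hAmeas
    _ < ⊤ := by
        simp only [hAdef]
        have : ∀ w : ℝ × ℝ, ENNReal.ofReal (C * (1 + ‖w‖) ^ (-r))
            = ENNReal.ofReal C * ENNReal.ofReal ((1 + ‖w‖) ^ (-r)) := by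
          intro w; rw [ENNReal.ofReal_mul hC0.le]
        simp_rw [this]
        rw [lintegral_const_mul _ (by fun_prop)]
        apply ENNReal.mul_lt_top ENNReal.ofReal_lt_top
        have hfr : (Module.finrank ℝ (ℝ × ℝ) : ℝ) < r := by
          rw [show Module.finrank ℝ (ℝ × ℝ) = 2 by simp]
          exact_mod_cast hr2
        exact finite_integral_one_add_norm hfr

/-! ### Divergence helpers -/

lemma integrableOn_of_setLIntegral_lt_top {f : ℝ → ℝ} {s : Set ℝ} (hs : MeasurableSet s)
    (hf : Measurable f) (h0 : ∀ x ∈ s, 0 ≤ f x)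
    (h : ∫⁻ x in s, ENNReal.ofReal (f x) ∂volume < ⊤) : IntegrableOn f s := by
  refine ⟨hf.aestronglyMeasurable, ?_⟩
  rw [hasFiniteIntegral_iff_ofReal ?_]
  · exact h
  · exact (ae_restrict_iff' hs).2 (ae_of_all _ h0)

lemma lintegral_inv_Ioo_top : ∫⁻ a in Ioo (0:ℝ) (1/2), ENNReal.ofReal a⁻¹ ∂volume = ⊤ := by
  by_contra hne
  have hlt : ∫⁻ a in Ioo (0:ℝ) (1/2), ENNReal.ofReal a⁻¹ ∂volume < ⊤ := lt_top_iff_ne_top.2 hne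
  have hint : IntegrableOn (fun a : ℝ => a⁻¹) (Ioo (0:ℝ) (1/2)) :=
    integrableOn_of_setLIntegral_lt_top measurableSet_Ioo measurable_inv
      (fun x hx => inv_nonneg.2 hx.1.le) hlt
  have hint2 : IntegrableOn (fun a : ℝ => a ^ (-1 : ℝ)) (Ioo (0:ℝ) (1/2)) := by
    apply hint.congr_fun _ measurableSet_Ioo
    intro x _
    show x⁻¹ = x ^ (-1 : ℝ)
    exact (Real.rpow_neg_one x).symm
  rw [intervalIntegral.integrableOn_Ioo_rpow_iff (by norm_num : (0:ℝ) < 1/2)] at hint2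
  linarith

lemma lintegral_rpow_Ioi_top {t : ℝ} (ht : -1 ≤ t) :
    ∫⁻ x in Ioi (3:ℝ), ENNReal.ofReal (x ^ t) ∂volume = ⊤ := by
  by_contra hne
  have hlt : ∫⁻ x in Ioi (3:ℝ), ENNReal.ofReal (x ^ t) ∂volume < ⊤ := lt_top_iff_ne_top.2 hne
  have hint : IntegrableOn (fun x : ℝ => x ^ t) (Ioi (3:ℝ)) :=
    integrableOn_of_setLIntegral_lt_top measurableSet_Ioi (by fun_prop)
      (fun x hx => Real.rpow_nonneg (by linarith [mem_Ioi.1 hx]) t) hlt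
  rw [integrableOn_Ioi_rpow_iff (by norm_num : (0:ℝ) < 3)] at hint
  linarith

/-! ### Divergence when `m₀ + p ≤ 0` -/

def Ra : Set G := Ioo (1:ℝ) 2 ×ˢ (Ioo (1:ℝ) 2 ×ˢ Ioo (0:ℝ) (1/2))

lemma Ra_meas : MeasurableSet Ra :=
  measurableSet_Ioo.prod (measurableSet_Ioo.prod measurableSet_Ioo)

lemma Ra_mem {q : G} (hq : q ∈ Ra) :
    1 < q.1 ∧ q.1 < 2 ∧ 1 < q.2.1 ∧ q.2.1 < 2 ∧ 0 < q.2.2 ∧ q.2.2 < 1/2 := by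
  obtain ⟨hx, hy, ha⟩ := hq
  exact ⟨hx.1, hx.2, hy.1, hy.2, ha.1, ha.2⟩

lemma Ra_sub : Ra ⊆ Gminus := by
  intro q hq
  obtain ⟨hx1, hx2, hy1, hy2, ha0, ha2⟩ := Ra_mem hq
  have ha1 : q.2.2 < 1 := by linarith
  refine ⟨ha1, ?_⟩
  have hρ : (3:ℝ) ≤ rho2 q := by unfold rho2; nlinarith
  have hainv : (2:ℝ) < q.2.2⁻¹ := by
    rw [show (2:ℝ) = (1/2:ℝ)⁻¹ by norm_num]
    exact inv_strictAnti₀ ha0 ha2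
  have h3 : (3:ℝ) ≤ Real.exp (rG q) := by
    have h := (exp_rG_bounds ha0 ha1).1
    nlinarith
  have : Real.exp 1 < Real.exp (rG q) := by
    have := Real.exp_one_lt_d9
    linarith
  exact Real.exp_lt_exp.1 this

lemma diverge_a (m₀ : ℤ) (n₁ n₂ p : ℕ) (hm₀ : -1 ≤ m₀) (h2 : m₀ + (p:ℤ) ≤ 0) :
    ∫⁻ x in Gminus, dens x * ENNReal.ofReal (intg m₀ (n₁:ℤ) (n₂:ℤ) p x) ∂volume = ⊤ := by
  set c : ℝ := (18:ℝ)⁻¹ ^ p with hc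
  have hc0 : 0 < c := by positivity
  -- pointwise lower bound on Ra
  have hpt : ∀ q ∈ Ra, ENNReal.ofReal (c * q.2.2⁻¹)
      ≤ dens q * ENNReal.ofReal (intg m₀ (n₁:ℤ) (n₂:ℤ) p q) := by
    intro q hq
    obtain ⟨hx1, hx2, hy1, hy2, ha0, ha2⟩ := Ra_mem hq
    have ha1 : q.2.2 < 1 := by linarith
    have hdens : dens q = ENNReal.ofReal q.2.2⁻¹ := by unfold dens; rw [if_pos ha0]
    rw [hdens, ← ENNReal.ofReal_mul (by positivity)]
    apply ENNReal.ofReal_le_ofReal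
    have hρ9 : rho2 q ≤ 9 := by unfold rho2; nlinarith
    have hρ0 := rho2_pos q
    have hexp := (exp_neg_bounds ha0 ha1 p).1
    have hexp2 : (q.2.2 / 18) ^ p ≤ Real.exp (-(p:ℝ) * rG q) := by
      refine le_trans (pow_le_pow_left₀ (by positivity) ?_ p) hexp
      apply div_le_div_of_nonneg_left ha0.le (by positivity) (by linarith)
    have habs1 : (1:ℝ) ≤ |q.1| ^ (n₁:ℤ) := by
      rw [zpow_natCast]
      exact one_le_pow₀ (by rw [abs_of_pos (by linarith)]; linarith)
    have habs2 : (1:ℝ) ≤ |q.2.1| ^ (n₂:ℤ) := by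
      rw [zpow_natCast]
      exact one_le_pow₀ (by rw [abs_of_pos (by linarith)]; linarith)
    have hzpow : q.2.2⁻¹ ≤ q.2.2 ^ (m₀ + (p:ℤ) - 1) := by
      rw [show q.2.2⁻¹ = q.2.2 ^ (-1 : ℤ) by rw [zpow_neg_one]]
      exact zpow_le_zpow_right_of_le_one₀ ha0 ha1.le (by omega)
    have hdiv : (q.2.2 / 18) ^ p = q.2.2 ^ (p:ℤ) * c := by
      rw [div_pow, hc, inv_pow, zpow_natCast, div_eq_mul_inv]
    have key : c * (q.2.2 ^ (m₀ + (p:ℤ) - 1)) = q.2.2⁻¹ * (q.2.2 ^ m₀ * (q.2.2 / 18) ^ p) := by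
      rw [hdiv, show m₀ + (p:ℤ) - 1 = m₀ + ((p:ℤ) + (-1)) by ring, zpow_add₀ ha0.ne',
        zpow_add₀ ha0.ne', zpow_neg_one]
      ring
    calc c * q.2.2⁻¹ ≤ c * q.2.2 ^ (m₀ + (p:ℤ) - 1) := by
          apply mul_le_mul_of_nonneg_left hzpow hc0.le
      _ ≤ q.2.2⁻¹ * (q.2.2 ^ m₀ * (q.2.2 / 18) ^ p) := le_of_eq key
      _ ≤ q.2.2⁻¹ * intg m₀ (n₁:ℤ) (n₂:ℤ) p q := by
          unfold intg
          have h0 : (0:ℝ) < q.2.2 ^ m₀ := zpow_pos ha0 m₀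
          calc q.2.2⁻¹ * (q.2.2 ^ m₀ * (q.2.2 / 18) ^ p)
              = q.2.2⁻¹ * (q.2.2 ^ m₀ * 1 * 1 * (q.2.2 / 18) ^ p) := by ring
            _ ≤ q.2.2⁻¹ * (q.2.2 ^ m₀ * |q.1| ^ (n₁:ℤ) * |q.2.1| ^ (n₂:ℤ)
                  * Real.exp (-(p:ℝ) * rG q)) := by
                apply mul_le_mul_of_nonneg_left _ (by positivity)
                apply mul_le_mul _ hexp2 (by positivity) (by positivity)
                apply mul_le_mul _ habs2 (by norm_num) (by positivity)
                exact mul_le_mul_of_nonneg_left habs1 h0.le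
      _ = q.2.2⁻¹ * intg m₀ (n₁:ℤ) (n₂:ℤ) p q := rfl
  have hmeas : Measurable fun q : G => dens q * ENNReal.ofReal (intg m₀ (n₁:ℤ) (n₂:ℤ) p q) :=
    measurable_dens.mul (measurable_intg _ _ _ _).ennreal_ofReal
  have hchain : ∫⁻ q in Ra, ENNReal.ofReal (c * q.2.2⁻¹) ∂volume
      ≤ ∫⁻ x in Gminus, dens x * ENNReal.ofReal (intg m₀ (n₁:ℤ) (n₂:ℤ) p x) ∂volume :=
    le_trans (setLIntegral_mono hmeas hpt) (lintegral_mono_set Ra_sub)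
  have hJ : ∫⁻ a in Ioo (0:ℝ) (1/2), ENNReal.ofReal (c * a⁻¹) ∂volume = ⊤ := by
    simp_rw [ENNReal.ofReal_mul hc0.le]
    rw [lintegral_const_mul _ measurable_inv.ennreal_ofReal, lintegral_inv_Ioo_top]
    exact ENNReal.mul_top (ENNReal.ofReal_pos.2 hc0).ne'
  have htop : ∫⁻ q in Ra, ENNReal.ofReal (c * q.2.2⁻¹) ∂volume = ⊤ := by
    have hresA : (volume : Measure G).restrict Ra
        = ((volume : Measure ℝ).restrict (Ioo 1 2)).prod
          (((volume : Measure ℝ).restrict (Ioo 1 2)).prod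
            ((volume : Measure ℝ).restrict (Ioo 0 (1/2)))) := by
      rw [Measure.prod_restrict, ← Measure.volume_eq_prod, Measure.prod_restrict,
        ← Measure.volume_eq_prod]
      rfl
    rw [hresA, lintegral_prod _ (by fun_prop)]
    have hinner : ∀ x : ℝ, (∫⁻ w : ℝ × ℝ, ENNReal.ofReal (c * w.2⁻¹)
        ∂(((volume : Measure ℝ).restrict (Ioo 1 2)).prod
            ((volume : Measure ℝ).restrict (Ioo 0 (1/2))))) = ⊤ := by
      intro x
      rw [lintegral_prod _ (by fun_prop)]
      simp_rw [hJ]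
      rw [lintegral_const, Measure.restrict_apply_univ, Real.volume_Ioo]
      rw [ENNReal.top_mul (by norm_num)]
    simp_rw [hinner 0]
    rw [lintegral_const, Measure.restrict_apply_univ, Real.volume_Ioo]
    rw [ENNReal.top_mul (by norm_num)]
  exact eq_top_iff.2 (le_trans (le_of_eq htop.symm) hchain)

/-! ### Divergence when `n₁ + n₂ - 2p ≥ -2` -/

def Sb : Set G := {q : G | 3 < q.1 ∧ q.1 < q.2.1 ∧ q.2.1 < 2*q.1 ∧ 1/2 < q.2.2 ∧ q.2.2 < 1}

lemma Sb_meas : MeasurableSet Sb := by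
  have : Sb = {q : G | 3 < q.1} ∩ ({q : G | q.1 < q.2.1} ∩ ({q : G | q.2.1 < 2*q.1}
      ∩ ({q : G | 1/2 < q.2.2} ∩ {q : G | q.2.2 < 1}))) := by
    ext q; simp [Sb, Set.mem_setOf_eq, and_assoc]
  rw [this]
  exact (measurableSet_lt measurable_const measurable_fst).inter
    ((measurableSet_lt measurable_fst measurable_snd.fst).inter
      ((measurableSet_lt measurable_snd.fst (measurable_fst.const_mul 2)).inter
        ((measurableSet_lt measurable_const measurable_snd.snd).inter
          (measurableSet_lt measurable_snd.snd measurable_const))))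

lemma Sb_sub : Sb ⊆ Gminus := by
  intro q hq
  obtain ⟨hx3, hxy, hy2x, ha2, ha1⟩ := hq
  have ha0 : 0 < q.2.2 := by linarith
  refine ⟨ha1, ?_⟩
  have hρ : (19:ℝ) ≤ rho2 q := by unfold rho2; nlinarith
  have hainv : (1:ℝ) ≤ q.2.2⁻¹ := (one_le_inv₀ ha0).2 ha1.le
  have h3 : (3:ℝ) ≤ Real.exp (rG q) := by
    have h := (exp_rG_bounds ha0 ha1).1
    nlinarith
  have : Real.exp 1 < Real.exp (rG q) := by
    have := Real.exp_one_lt_d9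
    linarith
  exact Real.exp_lt_exp.1 this

lemma diverge_b_pointwise (m₀ : ℤ) (n₁ n₂ p : ℕ) (hm₀ : -1 ≤ m₀) {q : G} (hq : q ∈ Sb) :
    (1/2:ℝ) ^ (m₀+1) * ((24:ℝ)⁻¹) ^ p * q.1 ^ ((n₁:ℤ) + (n₂:ℤ) - 2*(p:ℤ))
      ≤ q.2.2⁻¹ * intg m₀ (n₁:ℤ) (n₂:ℤ) p q := by
  obtain ⟨hx3, hxy, hy2x, ha2, ha1⟩ := hq
  have ha0 : 0 < q.2.2 := by linarith
  have hx0 : (0:ℝ) < q.1 := by linarith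
  have hy0 : (0:ℝ) < q.2.1 := by linarith
  have hx1 : (1:ℝ) ≤ q.1 ^ 2 := by nlinarith
  have hρ0 := rho2_pos q
  have hρ6 : rho2 q ≤ 6 * q.1 ^ 2 := by unfold rho2; nlinarith
  -- a ^ m₀ lower bound
  have hA : (1/2:ℝ) ^ (m₀+1) ≤ q.2.2 ^ m₀ := by
    obtain ⟨k, hk⟩ : ∃ k : ℕ, m₀ + 1 = (k:ℤ) :=
      ⟨(m₀+1).toNat, (Int.toNat_of_nonneg (by omega)).symm⟩
    have e1 : (1/2:ℝ) ^ (m₀+1) ≤ q.2.2 ^ (m₀+1) := by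
      rw [hk, zpow_natCast, zpow_natCast]
      exact pow_le_pow_left₀ (by norm_num) (by linarith) k
    have e2 : q.2.2 ^ (m₀+1) = q.2.2 ^ m₀ * q.2.2 := zpow_add_one₀ ha0.ne' m₀
    have e3 : q.2.2 ^ m₀ * q.2.2 ≤ q.2.2 ^ m₀ := by
      have := zpow_pos ha0 m₀
      nlinarith
    linarith
  -- |x₁| ^ n₁
  have hxn : q.1 ^ n₁ = |q.1| ^ (n₁:ℤ) := by rw [zpow_natCast, abs_of_pos hx0]
  -- |x₂| ^ n₂
  have hyn : q.1 ^ n₂ ≤ |q.2.1| ^ (n₂:ℤ) := by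
    rw [zpow_natCast, abs_of_pos hy0]
    exact pow_le_pow_left₀ hx0.le hxy.le n₂
  -- exp lower bound
  have hE : ((24:ℝ)⁻¹) ^ p * ((q.1 ^ 2)⁻¹) ^ p ≤ Real.exp (-(p:ℝ) * rG q) := by
    have h1 := (exp_neg_bounds ha0 ha1 p).1
    have h2 : (24 * q.1 ^ 2)⁻¹ ≤ q.2.2 / (2 * rho2 q) := by
      rw [inv_eq_one_div, div_le_div_iff₀ (by positivity) (by positivity)]
      nlinarith
    calc ((24:ℝ)⁻¹) ^ p * ((q.1 ^ 2)⁻¹) ^ p = ((24 * q.1 ^ 2)⁻¹) ^ p := by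
          rw [mul_inv, mul_pow]
      _ ≤ (q.2.2 / (2 * rho2 q)) ^ p := pow_le_pow_left₀ (by positivity) h2 p
      _ ≤ Real.exp (-(p:ℝ) * rG q) := h1
  -- zpow identity
  have hxid : q.1 ^ ((n₁:ℤ) + (n₂:ℤ) - 2*(p:ℤ)) = q.1 ^ n₁ * q.1 ^ n₂ * ((q.1 ^ 2)⁻¹) ^ p := by
    rw [inv_pow, ← pow_mul, ← zpow_natCast q.1 (2*p), ← zpow_neg,
      ← zpow_natCast q.1 n₁, ← zpow_natCast q.1 n₂,
      ← zpow_add₀ hx0.ne', ← zpow_add₀ hx0.ne']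
    congr 1
  have hainv : (1:ℝ) ≤ q.2.2⁻¹ := (one_le_inv₀ ha0).2 ha1.le
  have hintg : q.2.2 ^ m₀ * (q.1 ^ n₁ * q.1 ^ n₂ * (((24:ℝ)⁻¹) ^ p * ((q.1 ^ 2)⁻¹) ^ p))
      ≤ intg m₀ (n₁:ℤ) (n₂:ℤ) p q := by
    unfold intg
    have h0 : (0:ℝ) < q.2.2 ^ m₀ := zpow_pos ha0 m₀
    calc q.2.2 ^ m₀ * (q.1 ^ n₁ * q.1 ^ n₂ * (((24:ℝ)⁻¹) ^ p * ((q.1 ^ 2)⁻¹) ^ p))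
        ≤ q.2.2 ^ m₀ * (|q.1| ^ (n₁:ℤ) * |q.2.1| ^ (n₂:ℤ) * Real.exp (-(p:ℝ) * rG q)) := by
          apply mul_le_mul_of_nonneg_left _ h0.le
          apply mul_le_mul _ hE (by positivity) (by positivity)
          rw [← hxn]
          exact mul_le_mul_of_nonneg_left hyn (by positivity)
      _ = q.2.2 ^ m₀ * |q.1| ^ (n₁:ℤ) * |q.2.1| ^ (n₂:ℤ) * Real.exp (-(p:ℝ) * rG q) := by ring
  calc (1/2:ℝ) ^ (m₀+1) * ((24:ℝ)⁻¹) ^ p * q.1 ^ ((n₁:ℤ) + (n₂:ℤ) - 2*(p:ℤ))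
      = (1/2:ℝ) ^ (m₀+1) * (q.1 ^ n₁ * q.1 ^ n₂ * (((24:ℝ)⁻¹) ^ p * ((q.1 ^ 2)⁻¹) ^ p)) := by
        rw [hxid]; ring
    _ ≤ q.2.2 ^ m₀ * (q.1 ^ n₁ * q.1 ^ n₂ * (((24:ℝ)⁻¹) ^ p * ((q.1 ^ 2)⁻¹) ^ p)) := by
        apply mul_le_mul_of_nonneg_right hA (by positivity)
    _ ≤ intg m₀ (n₁:ℤ) (n₂:ℤ) p q := hintg
    _ ≤ q.2.2⁻¹ * intg m₀ (n₁:ℤ) (n₂:ℤ) p q := by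
        have h0 : 0 ≤ intg m₀ (n₁:ℤ) (n₂:ℤ) p q := intg_nonneg _ _ _ _ ha0
        nlinarith

lemma diverge_b (m₀ : ℤ) (n₁ n₂ p : ℕ) (hm₀ : -1 ≤ m₀)
    (h1 : -2 ≤ (n₁:ℤ) + (n₂:ℤ) - 2*(p:ℤ)) :
    ∫⁻ x in Gminus, dens x * ENNReal.ofReal (intg m₀ (n₁:ℤ) (n₂:ℤ) p x) ∂volume = ⊤ := by
  set t : ℤ := (n₁:ℤ) + (n₂:ℤ) - 2*(p:ℤ) with ht
  set cB : ℝ := (1/2:ℝ) ^ (m₀+1) * ((24:ℝ)⁻¹) ^ p with hcB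
  have hcB0 : 0 < cB := by
    rw [hcB]
    have : (0:ℝ) < (1/2:ℝ) ^ (m₀+1) := zpow_pos (by norm_num) _
    positivity
  set L : G → ENNReal := fun q => ENNReal.ofReal (cB * q.1 ^ t) with hL
  have hLmeas : Measurable L := by
    apply ENNReal.measurable_ofReal.comp
    fun_prop
  -- pointwise
  have hpt : ∀ q ∈ Sb, L q ≤ dens q * ENNReal.ofReal (intg m₀ (n₁:ℤ) (n₂:ℤ) p q) := by
    intro q hq
    have ha0 : 0 < q.2.2 := by have := hq.2.2.2.1; linarith
    have hdens : dens q = ENNReal.ofReal q.2.2⁻¹ := by unfold dens; rw [if_pos ha0]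
    rw [hL, hdens, ← ENNReal.ofReal_mul (by positivity)]
    apply ENNReal.ofReal_le_ofReal
    have := diverge_b_pointwise m₀ n₁ n₂ p hm₀ hq
    calc cB * q.1 ^ t = (1/2:ℝ) ^ (m₀+1) * ((24:ℝ)⁻¹) ^ p * q.1 ^ t := by rw [hcB]
      _ ≤ q.2.2⁻¹ * intg m₀ (n₁:ℤ) (n₂:ℤ) p q := this
  have hmeas : Measurable fun q : G => dens q * ENNReal.ofReal (intg m₀ (n₁:ℤ) (n₂:ℤ) p q) :=
    measurable_dens.mul (measurable_intg _ _ _ _).ennreal_ofReal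
  have hchain : ∫⁻ q in Sb, L q ∂volume
      ≤ ∫⁻ x in Gminus, dens x * ENNReal.ofReal (intg m₀ (n₁:ℤ) (n₂:ℤ) p x) ∂volume :=
    le_trans (setLIntegral_mono hmeas hpt) (lintegral_mono_set Sb_sub)
  -- compute the sector integral
  have htop : ∫⁻ q in Sb, L q ∂volume = ⊤ := by
    rw [← lintegral_indicator Sb_meas]
    rw [Measure.volume_eq_prod (α := ℝ) (β := ℝ × ℝ),
      lintegral_prod _ ((hLmeas.indicator Sb_meas).aemeasurable)]
    have hinner : ∀ x : ℝ, (∫⁻ w : ℝ × ℝ, Sb.indicator L (x, w) ∂volume)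
        = (Ioi (3:ℝ)).indicator
            (fun x => ENNReal.ofReal (cB * x ^ t) * (ENNReal.ofReal x * ENNReal.ofReal (1/2))) x := by
      intro x
      by_cases hx : 3 < x
      · rw [indicator_of_mem (mem_Ioi.2 hx)]
        have hfun : (fun w : ℝ × ℝ => Sb.indicator L (x, w))
            = (Ioo x (2*x) ×ˢ Ioo (1/2:ℝ) 1).indicator (fun _ => ENNReal.ofReal (cB * x ^ t)) := by
          funext w
          by_cases hw : w ∈ Ioo x (2*x) ×ˢ Ioo (1/2:ℝ) 1
          · rw [indicator_of_mem hw]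
            have hmem : ((x, w) : G) ∈ Sb := ⟨hx, hw.1.1, hw.1.2, hw.2.1, hw.2.2⟩
            rw [indicator_of_mem hmem]
          · rw [indicator_of_notMem hw, indicator_of_notMem]
            intro hc
            exact hw ⟨⟨hc.2.1, hc.2.2.1⟩, hc.2.2.2.1, hc.2.2.2.2⟩
        rw [hfun, lintegral_indicator (measurableSet_Ioo.prod measurableSet_Ioo),
          setLIntegral_const]
        congr 1
        rw [Measure.volume_eq_prod (α := ℝ) (β := ℝ), Measure.prod_prod,
          Real.volume_Ioo, Real.volume_Ioo]
        congr 2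
        · ring
        · norm_num
      · rw [indicator_of_notMem (by simpa using hx)]
        have hfun : (fun w : ℝ × ℝ => Sb.indicator L (x, w)) = fun _ => 0 :=
          funext fun w => indicator_of_notMem (fun hc => hx hc.1) _
        rw [hfun]
        simp
    simp_rw [hinner]
    rw [lintegral_indicator measurableSet_Ioi]
    have heq : ∀ x ∈ Ioi (3:ℝ),
        ENNReal.ofReal (cB * x ^ t) * (ENNReal.ofReal x * ENNReal.ofReal (1/2))
          = ENNReal.ofReal (cB/2) * ENNReal.ofReal (x ^ ((t:ℝ) + 1)) := by
      intro x hx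
      have hx0 : (0:ℝ) < x := by have := mem_Ioi.1 hx; linarith
      have hxt : (0:ℝ) < x ^ t := zpow_pos hx0 t
      rw [← ENNReal.ofReal_mul (by positivity : (0:ℝ) ≤ x),
        ← ENNReal.ofReal_mul (by positivity : (0:ℝ) ≤ cB * x ^ t),
        ← ENNReal.ofReal_mul (by positivity : (0:ℝ) ≤ cB / 2)]
      congr 1
      rw [Real.rpow_add hx0, Real.rpow_one, Real.rpow_intCast]
      ring
    rw [setLIntegral_congr_fun measurableSet_Ioi heq]
    rw [lintegral_const_mul _ (by fun_prop)]
    rw [lintegral_rpow_Ioi_top (by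
      have h1' : (-2:ℝ) ≤ (t:ℝ) := by exact_mod_cast h1
      linarith)]
    exact ENNReal.mul_top (ENNReal.ofReal_pos.2 (by positivity)).ne'
  exact eq_top_iff.2 (le_trans (le_of_eq htop.symm) hchain)

/-- Lemma 2.2 (ii): for `m = (m₀,m₁,m₂) ∈ ℤ³` with `m₁,m₂ ≥ 0`, `m₀ ≥ -1`, and `p ∈ ℕ`,
the function `x^m e^{-p r}` is integrable on `G₋` with respect to `ρ` iff
`m₁ + m₂ - 2p < -2` and `m₀ + p > 0`. -/
theorem integrability_on_Gminus (m₀ m₁ m₂ : ℤ) (hm₁ : 0 ≤ m₁) (hm₂ : 0 ≤ m₂) (hm₀ : -1 ≤ m₀)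
    (p : ℕ) :
    (∫⁻ x in Gminus, ENNReal.ofReal
        (x.2.2 ^ m₀ * |x.1| ^ m₁ * |x.2.1| ^ m₂ * Real.exp (-(p : ℝ) * rG x)) ∂ρG) < ⊤ ↔
      (m₁ + m₂ - 2 * (p : ℤ) < -2 ∧ 0 < m₀ + (p : ℤ)) := by
  lift m₁ to ℕ using hm₁ with n₁
  lift m₂ to ℕ using hm₂ with n₂
  have hrw : (∫⁻ x in Gminus, ENNReal.ofReal
        (x.2.2 ^ m₀ * |x.1| ^ (n₁:ℤ) * |x.2.1| ^ (n₂:ℤ) * Real.exp (-(p : ℝ) * rG x)) ∂ρG)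
      = ∫⁻ x in Gminus, dens x * ENNReal.ofReal (intg m₀ (n₁:ℤ) (n₂:ℤ) p x) ∂volume :=
    key_reduction m₀ (n₁:ℤ) (n₂:ℤ) p
  rw [hrw]
  constructor
  · intro hfin
    constructor
    · by_contra hcon
      push_neg at hcon
      rw [diverge_b m₀ n₁ n₂ p hm₀ hcon] at hfin
      exact lt_irrefl ⊤ hfin
    · by_contra hcon
      push_neg at hcon
      rw [diverge_a m₀ n₁ n₂ p hm₀ hcon] at hfin
      exact lt_irrefl ⊤ hfin
  · rintro ⟨h1, h2⟩
    exact forward m₀ n₁ n₂ p h1 h2
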